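/- (Theorem 4: stabilizability as an exact model-matching problem.) Let (M, N, M̃, Ñ, X, Y, X̃, Ỹ) be a DCF of the strictly proper plant G ∈ F^{m×p} over Ω, and let the sparsity subspace S defined by K^bin be QI under G. Then there exists a controller in S that stabilizes G if and only if there exists a stable Q ∈ 𝔸^{p×m} such that (X̃·M̃ + M·Q·M̃) i j = 0 for every (i,j) with K^bin i j = false (equivalently, (M·X + M·Q·M̃) i j = 0 for every such (i,j), since M·X = X̃·M̃; this is the entrywise form of the exact model-matching equations Φ(Mᵀ⊗M̃)vec(Q) + Φ vec(X̃M̃) = 0 with Φ = I − diag(vec(K^bin))). Moreover, for any such Q, the controller K_Q belongs to S and stabilizes G. -/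
import Mathlib


open Matrix

noncomputable section

/-- The field of real rational functions. -/
abbrev F : Type := RatFunc ℝ

/-- A rational function is stable (w.r.t. stability region `Ω`) if it is proper and
every complex root of the complexification of its reduced denominator lies in `Ω`. -/
def StableF (Ω : Set ℂ) (f : F) : Prop :=
  f.intDegree ≤ 0 ∧ ∀ z : ℂ, (f.denom.map (algebraMap ℝ ℂ)).IsRoot z → z ∈ Ω

/-- A matrix over `F` is stable if all its entries are stable. -/
def MatStable (Ω : Set ℂ) {a b : Type} (M : Matrix a b F) : Prop :=
  ∀ i j, StableF Ω (M i j)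

/-- A matrix over `F` is strictly proper if every entry is `0` or has negative `intDegree`. -/
def StrictlyProper {a b : Type} (G : Matrix a b F) : Prop :=
  ∀ i j, G i j = 0 ∨ (G i j).intDegree < 0

/-- A matrix over `F` is proper if every entry has nonpositive `intDegree`. -/
def ProperM {a b : Type} (K : Matrix a b F) : Prop :=
  ∀ i j, (K i j).intDegree ≤ 0

/-- `K` stabilizes `G` if `I + G*K` is invertible and the four closed-loop
transfer matrices are stable. -/
def Stabilizes (Ω : Set ℂ) {m p : ℕ} (G : Matrix (Fin m) (Fin p) F)
    (K : Matrix (Fin p) (Fin m) F) : Prop :=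
  IsUnit (1 + G * K).det ∧
    MatStable Ω (1 + G * K)⁻¹ ∧
    MatStable Ω ((1 + G * K)⁻¹ * G) ∧
    MatStable Ω (K * (1 + G * K)⁻¹) ∧
    MatStable Ω (1 + K * G)⁻¹

/-- A doubly coprime factorization of `G` over `Ω`. -/
structure IsDCF (Ω : Set ℂ) {m p : ℕ} (G : Matrix (Fin m) (Fin p) F)
    (M : Matrix (Fin p) (Fin p) F) (N : Matrix (Fin m) (Fin p) F)
    (Mt : Matrix (Fin m) (Fin m) F) (Nt : Matrix (Fin m) (Fin p) F)
    (X : Matrix (Fin p) (Fin m) F) (Y : Matrix (Fin p) (Fin p) F)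
    (Xt : Matrix (Fin p) (Fin m) F) (Yt : Matrix (Fin m) (Fin m) F) : Prop where
  stM : MatStable Ω M
  stN : MatStable Ω N
  stMt : MatStable Ω Mt
  stNt : MatStable Ω Nt
  stX : MatStable Ω X
  stY : MatStable Ω Y
  stXt : MatStable Ω Xt
  stYt : MatStable Ω Yt
  hM : IsUnit M.det
  hMt : IsUnit Mt.det
  hLeft : G = Mt⁻¹ * Nt
  hRight : G = N * M⁻¹
  bezout : Matrix.fromBlocks Y X (-Nt) Mt * Matrix.fromBlocks M (-Xt) N Yt = 1

/-- A left coprime factorization of `G` over `Ω`. -/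
def IsLCF (Ω : Set ℂ) {m p : ℕ} (G : Matrix (Fin m) (Fin p) F)
    (Mt : Matrix (Fin m) (Fin m) F) (Nt : Matrix (Fin m) (Fin p) F) : Prop :=
  MatStable Ω Mt ∧ MatStable Ω Nt ∧ IsUnit Mt.det ∧ G = Mt⁻¹ * Nt ∧
    ∃ Xt : Matrix (Fin p) (Fin m) F, ∃ Yt : Matrix (Fin m) (Fin m) F,
      MatStable Ω Xt ∧ MatStable Ω Yt ∧ Nt * Xt + Mt * Yt = 1

/-- A right coprime factorization of `G` over `Ω`. -/
def IsRCF (Ω : Set ℂ) {m p : ℕ} (G : Matrix (Fin m) (Fin p) F)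
    (N : Matrix (Fin m) (Fin p) F) (M : Matrix (Fin p) (Fin p) F) : Prop :=
  MatStable Ω N ∧ MatStable Ω M ∧ IsUnit M.det ∧ G = N * M⁻¹ ∧
    ∃ X : Matrix (Fin p) (Fin m) F, ∃ Y : Matrix (Fin p) (Fin p) F,
      MatStable Ω X ∧ MatStable Ω Y ∧ Y * M + X * N = 1

/-- Evaluation of a rational function at a complex point (complexified num/denom). -/
def evalC (z : ℂ) (f : F) : ℂ :=
  (f.num.map (algebraMap ℝ ℂ)).eval z / (f.denom.map (algebraMap ℝ ℂ)).eval z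


/-! ### Auxiliary machinery -/

section Aux

open Polynomial

lemma two_ne_zero_F : (2:F) ≠ 0 := by
  have h : Function.Injective (algebraMap (Polynomial ℝ) F) := RatFunc.algebraMap_injective ℝ
  have h2 : algebraMap (Polynomial ℝ) F 2 = (2:F) := map_ofNat _ 2
  rw [← h2]
  simp only [ne_eq, map_eq_zero_iff _ h]
  norm_num

/-- scalar properness -/
def Pr (f : F) : Prop := f.intDegree ≤ 0
/-- scalar strict properness -/
def SP (f : F) : Prop := f = 0 ∨ f.intDegree < 0

lemma Pr_add {f g : F} (hf : Pr f) (hg : Pr g) : Pr (f + g) := by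
  rcases eq_or_ne g 0 with rfl | hg0
  · simpa using hf
  rcases eq_or_ne (f + g) 0 with h | h
  · simp [Pr, h, RatFunc.intDegree_zero]
  · exact le_trans (RatFunc.intDegree_add_le hg0 h) (max_le hf hg)

lemma Pr_mul {f g : F} (hf : Pr f) (hg : Pr g) : Pr (f * g) := by
  rcases eq_or_ne f 0 with rfl | hf0
  · simp [Pr, RatFunc.intDegree_zero]
  rcases eq_or_ne g 0 with rfl | hg0
  · simp [Pr, RatFunc.intDegree_zero]
  · unfold Pr at *; rw [RatFunc.intDegree_mul hf0 hg0]; exact add_nonpos hf hg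

lemma Pr_zero : Pr (0:F) := by simp [Pr, RatFunc.intDegree_zero]
lemma Pr_one : Pr (1:F) := by simp [Pr, RatFunc.intDegree_one]

lemma SP_Pr {f : F} (h : SP f) : Pr f := by
  rcases h with rfl | h
  · exact Pr_zero
  · exact le_of_lt h

lemma SP_add {f g : F} (hf : SP f) (hg : SP g) : SP (f + g) := by
  rcases hf with rfl | hf
  · simpa using hg
  rcases hg with rfl | hg
  · simp [SP, hf]
  rcases eq_or_ne (f + g) 0 with h | h
  · exact Or.inl h
  · exact Or.inr (lt_of_le_of_lt (RatFunc.intDegree_add_le (fun h0 => by simp [h0] at hg) h)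
      (max_lt hf hg))

lemma SP_mul_Pr {f g : F} (hf : SP f) (hg : Pr g) : SP (f * g) := by
  rcases hf with rfl | hf
  · simp [SP]
  rcases eq_or_ne g 0 with rfl | hg0
  · simp [SP]
  refine Or.inr ?_
  rw [RatFunc.intDegree_mul (fun h0 => by simp [h0, RatFunc.intDegree_zero] at hf) hg0]
  exact add_neg_of_neg_of_nonpos hf hg

lemma Pr_mul_SP {f g : F} (hf : Pr f) (hg : SP g) : SP (f * g) := by
  rw [mul_comm]; exact SP_mul_Pr hg hf

lemma SP_neg {f : F} (hf : SP f) : SP (-f) := by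
  rcases hf with rfl | hf
  · simp [SP]
  · exact Or.inr (by rwa [RatFunc.intDegree_neg])

lemma SP_sum {ι : Type*} (s : Finset ι) (f : ι → F) (h : ∀ i ∈ s, SP (f i)) :
    SP (∑ i ∈ s, f i) := by
  classical
  induction s using Finset.induction_on with
  | empty => simp [SP]
  | @insert a s' hx ih =>
      rw [Finset.sum_insert hx]
      exact SP_add (h a (Finset.mem_insert_self a s'))
        (ih fun i hi => h i (Finset.mem_insert_of_mem hi))

lemma Pr_prod {ι : Type*} (s : Finset ι) (f : ι → F) (h : ∀ i ∈ s, Pr (f i)) :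
    Pr (∏ i ∈ s, f i) := by
  classical
  induction s using Finset.induction_on with
  | empty => simp [Pr_one]
  | @insert a s' hx ih =>
      rw [Finset.prod_insert hx]
      exact Pr_mul (h a (Finset.mem_insert_self a s'))
        (ih fun i hi => h i (Finset.mem_insert_of_mem hi))

lemma St_zero (Ω : Set ℂ) : StableF Ω 0 := by
  constructor
  · simp [RatFunc.intDegree_zero]
  · intro z hz
    simp [RatFunc.denom_zero, Polynomial.IsRoot] at hz

lemma St_one (Ω : Set ℂ) : StableF Ω 1 := by
  constructor
  · simp [RatFunc.intDegree_one]
  · intro z hz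
    simp [RatFunc.denom_one, Polynomial.IsRoot] at hz

lemma root_of_dvd {d D : Polynomial ℝ} (hdvd : d ∣ D) {z : ℂ}
    (hz : (d.map (algebraMap ℝ ℂ)).IsRoot z) : (D.map (algebraMap ℝ ℂ)).IsRoot z := by
  obtain ⟨c, rfl⟩ := hdvd
  simp [Polynomial.IsRoot, Polynomial.eval_mul, hz.eq_zero]

lemma St_add {Ω : Set ℂ} {f g : F} (hf : StableF Ω f) (hg : StableF Ω g) :
    StableF Ω (f + g) := by
  refine ⟨Pr_add hf.1 hg.1, fun z hz => ?_⟩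
  have := root_of_dvd (RatFunc.denom_add_dvd f g) hz
  rw [Polynomial.map_mul, Polynomial.IsRoot, Polynomial.eval_mul] at this
  rcases mul_eq_zero.mp this with h | h
  · exact hf.2 z h
  · exact hg.2 z h

lemma St_mul {Ω : Set ℂ} {f g : F} (hf : StableF Ω f) (hg : StableF Ω g) :
    StableF Ω (f * g) := by
  refine ⟨Pr_mul hf.1 hg.1, fun z hz => ?_⟩
  have := root_of_dvd (RatFunc.denom_mul_dvd f g) hz
  rw [Polynomial.map_mul, Polynomial.IsRoot, Polynomial.eval_mul] at this
  rcases mul_eq_zero.mp this with h | h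
  · exact hf.2 z h
  · exact hg.2 z h

lemma St_neg {Ω : Set ℂ} {f : F} (hf : StableF Ω f) : StableF Ω (-f) := by
  have : -f = (-1 : F) * f := by ring
  rw [this]
  refine St_mul ⟨?_, ?_⟩ hf
  · rw [show (-1:F) = -(1:F) by ring, RatFunc.intDegree_neg]
    simp [RatFunc.intDegree_one]
  · intro z hz
    have h1 : ((-1:F)).denom = 1 := by
      rw [show (-1:F) = RatFunc.C (-1) by rw [_root_.map_neg, _root_.map_one]]
      exact RatFunc.denom_C _
    rw [h1] at hz
    simp [Polynomial.IsRoot] at hz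

lemma St_sum {Ω : Set ℂ} {ι : Type*} (s : Finset ι) (f : ι → F)
    (h : ∀ i ∈ s, StableF Ω (f i)) : StableF Ω (∑ i ∈ s, f i) := by
  classical
  induction s using Finset.induction_on with
  | empty => simpa using St_zero Ω
  | @insert a s' hx ih =>
      rw [Finset.sum_insert hx]
      exact St_add (h a (Finset.mem_insert_self a s'))
        (ih fun i hi => h i (Finset.mem_insert_of_mem hi))

section MatLemmas
set_option linter.unusedSectionVars false
variable {Ω : Set ℂ} {a b c : Type} [Fintype b]

lemma MS_mul {A : Matrix a b F} {B : Matrix b c F} (hA : MatStable Ω A) (hB : MatStable Ω B) :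
    MatStable Ω (A * B) := fun i j => by
  rw [Matrix.mul_apply]
  exact St_sum _ _ fun k _ => St_mul (hA i k) (hB k j)

lemma MS_add {A B : Matrix a b F} (hA : MatStable Ω A) (hB : MatStable Ω B) :
    MatStable Ω (A + B) := fun i j => St_add (hA i j) (hB i j)

lemma MS_neg {A : Matrix a b F} (hA : MatStable Ω A) : MatStable Ω (-A) :=
  fun i j => by rw [Matrix.neg_apply]; exact St_neg (hA i j)

lemma MS_sub {A B : Matrix a b F} (hA : MatStable Ω A) (hB : MatStable Ω B) :
    MatStable Ω (A - B) := by
  rw [sub_eq_add_neg]; exact MS_add hA (MS_neg hB)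

lemma MS_one {n : Type} [DecidableEq n] : MatStable Ω (1 : Matrix n n F) := fun i j => by
  rcases eq_or_ne i j with rfl | h
  · rw [Matrix.one_apply_eq]; exact St_one Ω
  · rw [Matrix.one_apply_ne h]; exact St_zero Ω

lemma MS_Pr {A : Matrix a b F} (hA : MatStable Ω A) : ProperM A := fun i j => (hA i j).1

lemma SPM_mul_PrM {A : Matrix a b F} {B : Matrix b c F} (hA : StrictlyProper A)
    (hB : ProperM B) : StrictlyProper (A * B) := fun i j => by
  rw [Matrix.mul_apply]
  exact SP_sum _ _ fun k _ => SP_mul_Pr (hA i k) (hB k j)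

lemma PrM_mul_SPM {A : Matrix a b F} {B : Matrix b c F} (hA : ProperM A)
    (hB : StrictlyProper B) : StrictlyProper (A * B) := fun i j => by
  rw [Matrix.mul_apply]
  exact SP_sum _ _ fun k _ => Pr_mul_SP (hA i k) (hB k j)

end MatLemmas

lemma prod_one_add_SP {ι : Type*} (s : Finset ι) (c : ι → F) (h : ∀ i ∈ s, SP (c i)) :
    ∃ t : F, SP t ∧ ∏ i ∈ s, (1 + c i) = 1 + t := by
  classical
  induction s using Finset.induction_on with
  | empty => exact ⟨0, Or.inl rfl, by simp⟩
  | @insert a s' hx ih =>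
      obtain ⟨t, ht, hprod⟩ := ih fun i hi => h i (Finset.mem_insert_of_mem hi)
      have ha : SP (c a) := h a (Finset.mem_insert_self a s')
      refine ⟨c a + t + c a * t, ?_, ?_⟩
      · exact SP_add (SP_add ha ht) (SP_mul_Pr ha (SP_Pr ht))
      · rw [Finset.prod_insert hx, hprod]; ring

lemma det_one_add_SP {k : ℕ} (C : Matrix (Fin k) (Fin k) F) (hC : StrictlyProper C) :
    ∃ t : F, SP t ∧ (1 + C).det = 1 + t := by
  classical
  rw [Matrix.det_apply']
  have key : ∀ σ : Equiv.Perm (Fin k), σ ≠ 1 →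
      SP ((Equiv.Perm.sign σ : ℤ) * ∏ i, (1 + C) (σ i) i) := by
    intro σ hσ
    obtain ⟨i0, hi0⟩ : ∃ i, σ i ≠ i := by
      by_contra h
      push_neg at h
      exact hσ (Equiv.ext fun x => h x)
    have hsplit := Finset.mul_prod_erase Finset.univ (fun i => (1 + C) (σ i) i)
      (Finset.mem_univ i0)
    rw [← hsplit]
    have h1 : (1 + C) (σ i0) i0 = C (σ i0) i0 := by
      rw [Matrix.add_apply, Matrix.one_apply_ne hi0]; ring
    have hsp : SP ((1 + C) (σ i0) i0 * ∏ x ∈ Finset.univ.erase i0, (1 + C) (σ x) x) := by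
      refine SP_mul_Pr (by rw [h1]; exact hC _ _) (Pr_prod _ _ fun x _ => ?_)
      rw [Matrix.add_apply]
      rcases eq_or_ne (σ x) x with he | he
      · rw [he, Matrix.one_apply_eq]
        exact Pr_add Pr_one (SP_Pr (hC _ _))
      · rw [Matrix.one_apply_ne he]
        exact Pr_add Pr_zero (SP_Pr (hC _ _))
    rcases Int.units_eq_one_or (Equiv.Perm.sign σ) with hs | hs <;> rw [hs] <;> push_cast <;>
      [simpa using hsp; simpa using SP_neg hsp]
  have hid : ((Equiv.Perm.sign (1 : Equiv.Perm (Fin k)) : ℤ) : F) = 1 := by simp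
  obtain ⟨t, ht, hprod⟩ := prod_one_add_SP Finset.univ (fun i => C i i)
    (fun i _ => hC i i)
  have hsum := Finset.sum_erase_add Finset.univ
    (fun σ : Equiv.Perm (Fin k) => ((Equiv.Perm.sign σ : ℤ) : F) * ∏ i, (1 + C) (σ i) i)
    (Finset.mem_univ 1)
  rw [← hsum]
  have hprod1 : ∏ i, (1 + C) ((1 : Equiv.Perm (Fin k)) i) i = 1 + t := by
    rw [← hprod]
    refine Finset.prod_congr rfl fun i _ => ?_
    rw [Equiv.Perm.one_apply, Matrix.add_apply, Matrix.one_apply_eq]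
  have hrest : SP (∑ σ ∈ Finset.univ.erase (1 : Equiv.Perm (Fin k)),
      ((Equiv.Perm.sign σ : ℤ) : F) * ∏ i, (1 + C) (σ i) i) :=
    SP_sum _ _ fun σ hσ => key σ (Finset.ne_of_mem_erase hσ)
  refine ⟨(∑ σ ∈ Finset.univ.erase (1 : Equiv.Perm (Fin k)),
      ((Equiv.Perm.sign σ : ℤ) : F) * ∏ i, (1 + C) (σ i) i) + t, SP_add hrest ht, ?_⟩
  beta_reduce
  rw [hid, hprod1]; ring

lemma SP_ne_neg_one {t : F} (ht : SP t) : t ≠ -1 := by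
  rintro rfl
  rcases ht with h | h
  · exact absurd h (by norm_num)
  · rw [RatFunc.intDegree_neg, RatFunc.intDegree_one] at h; exact absurd h (by norm_num)

lemma det_one_add_SP_ne_zero {k : ℕ} (C : Matrix (Fin k) (Fin k) F)
    (hC : StrictlyProper C) : (1 + C).det ≠ 0 := by
  obtain ⟨t, ht, hdet⟩ := det_one_add_SP C hC
  rw [hdet]
  intro h
  exact SP_ne_neg_one ht (by linear_combination h)

lemma det_one_sub_SP_ne_zero {k : ℕ} (C : Matrix (Fin k) (Fin k) F)
    (hC : StrictlyProper C) : (1 - C).det ≠ 0 := by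
  have h1 : StrictlyProper (-C) := fun i j => by
    rw [Matrix.neg_apply]; exact SP_neg (hC i j)
  have := det_one_add_SP_ne_zero (-C) h1
  rwa [← sub_eq_add_neg] at this

section QI
set_option synthInstance.maxHeartbeats 1000000
set_option maxHeartbeats 1000000
variable {m p : ℕ} (Kbin : Fin p → Fin m → Bool)

/-- The sparsity constraint. -/
def Sparse (K : Matrix (Fin p) (Fin m) F) : Prop := ∀ i j, Kbin i j = false → K i j = 0

lemma sparse_powers (G' : Matrix (Fin m) (Fin p) F)
    (hQI : ∀ K : Matrix (Fin p) (Fin m) F, Sparse Kbin K →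
      ∀ i j, Kbin i j = false → (K * G' * K) i j = 0)
    (K : Matrix (Fin p) (Fin m) F) (hK : Sparse Kbin K) :
    ∀ n : ℕ, Sparse Kbin (K * (G' * K) ^ n) := by
  intro n
  induction n with
  | zero => simpa using hK
  | succ n ih =>
    set T := K * (G' * K) ^ n with hT
    have hsum : Sparse Kbin (K + T) := fun i j h => by
      rw [Matrix.add_apply, hK i j h, ih i j h, add_zero]
    intro i j hij
    have hq := hQI (K + T) hsum i j hij
    have e1 : (K + T) * G' * (K + T) = K * G' * K + (K * G' * T + T * G' * K) + T * G' * T := by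
      rw [Matrix.add_mul, Matrix.add_mul, Matrix.mul_add, Matrix.mul_add]
      abel
    have e2 : K * G' * T = K * (G' * K) ^ (n + 1) := by
      rw [hT, pow_succ' (G' * K) n]; simp only [← Matrix.mul_assoc]
    have e3 : T * G' * K = K * (G' * K) ^ (n + 1) := by
      rw [hT, pow_succ (G' * K) n]; simp only [← Matrix.mul_assoc]
    rw [e1, e2, e3] at hq
    have h0 : (K * G' * K) i j = 0 := hQI K hK i j hij
    have h1 : (T * G' * T) i j = 0 := hQI T ih i j hij
    simp only [Matrix.add_apply, h0, h1, zero_add, add_zero] at hq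
    have h2 : (2:F) * (K * (G' * K) ^ (n + 1)) i j = 0 := by
      rw [two_mul]; exact hq
    exact (mul_eq_zero.mp h2).resolve_left two_ne_zero_F

lemma sparse_closed_loop (G' : Matrix (Fin m) (Fin p) F)
    (hQI : ∀ K : Matrix (Fin p) (Fin m) F, Sparse Kbin K →
      ∀ i j, Kbin i j = false → (K * G' * K) i j = 0)
    (K : Matrix (Fin p) (Fin m) F) (hK : Sparse Kbin K)
    (hdet : IsUnit (1 + G' * K).det) :
    Sparse Kbin (K * (1 + G' * K)⁻¹) := by
  set B := G' * K with hB
  set A := 1 + B with hA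
  set q := A.charpoly.divX with hq
  have hch : Polynomial.X * A.charpoly.divX + Polynomial.C (A.charpoly.coeff 0) = A.charpoly :=
    Polynomial.X_mul_divX_add _
  have haev : Polynomial.aeval A A.charpoly = 0 := Matrix.aeval_self_charpoly A
  have hAB : A * Polynomial.aeval A q + (A.charpoly.coeff 0) • (1 : Matrix (Fin m) (Fin m) F)
      = 0 := by
    have := congrArg (Polynomial.aeval A) hch
    rw [map_add, _root_.map_mul, Polynomial.aeval_X, Polynomial.aeval_C, haev] at this
    rw [← this, hq]
    congr 1
    rw [Algebra.algebraMap_eq_smul_one]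
  have hc0 : A.charpoly.coeff 0 ≠ 0 := by
    intro h
    have hd := Matrix.det_eq_sign_charpoly_coeff A
    rw [h, mul_zero] at hd
    rw [hd] at hdet
    exact (by simpa using hdet : ¬ IsUnit (0:F)) hdet |>.elim
  set c : F := -(A.charpoly.coeff 0) with hcdef
  have hcne : c ≠ 0 := neg_ne_zero.mpr hc0
  have hright : A * (c⁻¹ • Polynomial.aeval A q) = 1 := by
    rw [Matrix.mul_smul]
    have : A * Polynomial.aeval A q = c • 1 := by
      rw [hcdef, neg_smul]
      exact eq_neg_of_add_eq_zero_left hAB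
    rw [this, smul_smul, inv_mul_cancel₀ hcne, one_smul]
  have hinv : A⁻¹ = c⁻¹ • Polynomial.aeval A q := Matrix.inv_eq_right_inv hright
  set r := q.comp (Polynomial.X + 1) with hr
  have haevr : Polynomial.aeval B r = Polynomial.aeval A q := by
    rw [hr, Polynomial.aeval_comp]
    congr 1
    rw [map_add, Polynomial.aeval_X, Polynomial.aeval_one, hA, add_comm]
  intro i j hij
  rw [hinv, ← haevr, Polynomial.aeval_eq_sum_range, Matrix.mul_smul, Matrix.mul_sum]
  rw [Matrix.smul_apply, Matrix.sum_apply]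
  have : ∀ k ∈ Finset.range (r.natDegree + 1), (K * (r.coeff k • B ^ k)) i j = 0 := by
    intro k _
    rw [Matrix.mul_smul, Matrix.smul_apply, sparse_powers Kbin G' hQI K hK k i j hij, smul_zero]
  rw [Finset.sum_congr rfl this]
  simp
end QI

section Bezout
set_option maxHeartbeats 1000000
variable {P M : Type} [Fintype P] [Fintype M] [DecidableEq P] [DecidableEq M]
variable {R : Type} [CommRing R]

lemma bezout_ids {Y : Matrix P P R} {X : Matrix P M R} {Nt : Matrix M P R} {Mt : Matrix M M R}
    {Mm : Matrix P P R} {Xt : Matrix P M R} {N : Matrix M P R} {Yt : Matrix M M R}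
    (h : fromBlocks Y X (-Nt) Mt * fromBlocks Mm (-Xt) N Yt = 1) :
    (Y * Mm + X * N = 1) ∧ (X * Yt = Y * Xt) ∧ (Mt * N = Nt * Mm) ∧ (Nt * Xt + Mt * Yt = 1) ∧
    (Mm * Y + Xt * Nt = 1) ∧ (Mm * X = Xt * Mt) ∧ (N * Y = Yt * Nt) ∧ (N * X + Yt * Mt = 1) := by
  have h' : fromBlocks Mm (-Xt) N Yt * fromBlocks Y X (-Nt) Mt = 1 :=
    mul_eq_one_comm.mp h
  rw [Matrix.fromBlocks_multiply, ← Matrix.fromBlocks_one, Matrix.fromBlocks_inj] at h h'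
  obtain ⟨h11, h12, h21, h22⟩ := h
  obtain ⟨g11, g12, g21, g22⟩ := h'
  refine ⟨h11, ?_, ?_, ?_, ?_, ?_, ?_, g22⟩
  · rw [Matrix.mul_neg, neg_add_eq_zero] at h12; exact h12.symm
  · rw [Matrix.neg_mul, neg_add_eq_zero] at h21; exact h21.symm
  · rwa [Matrix.neg_mul, Matrix.mul_neg, neg_neg] at h22
  · rwa [Matrix.neg_mul, Matrix.mul_neg, neg_neg] at g11
  · rwa [Matrix.neg_mul, add_neg_eq_zero] at g12
  · rwa [Matrix.mul_neg, add_neg_eq_zero] at g21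

lemma bezout_perturb {Y : Matrix P P R} {X : Matrix P M R} {Nt : Matrix M P R} {Mt : Matrix M M R}
    {Mm : Matrix P P R} {Xt : Matrix P M R} {N : Matrix M P R} {Yt : Matrix M M R}
    (h : fromBlocks Y X (-Nt) Mt * fromBlocks Mm (-Xt) N Yt = 1) (Q : Matrix P M R) :
    fromBlocks (Y - Q * Nt) (X + Q * Mt) (-Nt) Mt *
      fromBlocks Mm (-(Xt + Mm * Q)) N (Yt - N * Q) = 1 := by
  have e1 : fromBlocks (1 : Matrix P P R) Q 0 1 * fromBlocks Y X (-Nt) Mt =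
      fromBlocks (Y - Q * Nt) (X + Q * Mt) (-Nt) Mt := by
    rw [Matrix.fromBlocks_multiply]
    congr 1 <;> simp [Matrix.mul_neg, sub_eq_add_neg]
  have e2 : fromBlocks Mm (-Xt) N Yt * fromBlocks (1 : Matrix P P R) (-Q) 0 1 =
      fromBlocks Mm (-(Xt + Mm * Q)) N (Yt - N * Q) := by
    rw [Matrix.fromBlocks_multiply]
    congr 1 <;> simp [Matrix.mul_neg, sub_eq_add_neg, add_comm]
  rw [← e1, ← e2, Matrix.mul_assoc, ← Matrix.mul_assoc (fromBlocks Y X (-Nt) Mt), h,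
    Matrix.one_mul, Matrix.fromBlocks_multiply]
  rw [← Matrix.fromBlocks_one (l := P) (m := M)]
  congr 1 <;> simp

end Bezout

end Aux

set_option maxHeartbeats 4000000 in
set_option synthInstance.maxHeartbeats 1000000 in
/-- **Theorem 4.** Given a DCF of the strictly proper plant `G` and a QI sparsity subspace `S`,
there exists a stabilizing controller in `S` iff the exact model-matching problem
`(X̃·M̃ + M·Q·M̃) i j = 0` (for all `(i,j)` with `Kbin i j = false`) has a stable solution `Q`;
moreover for any such `Q`, the controller `K_Q` lies in `S` and stabilizes `G`. -/
theorem stabilizability_iff_model_matching (Ω : Set ℂ) (m p : ℕ)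
    (G : Matrix (Fin m) (Fin p) F) (hG : StrictlyProper G)
    (M : Matrix (Fin p) (Fin p) F) (N : Matrix (Fin m) (Fin p) F)
    (Mt : Matrix (Fin m) (Fin m) F) (Nt : Matrix (Fin m) (Fin p) F)
    (X : Matrix (Fin p) (Fin m) F) (Y : Matrix (Fin p) (Fin p) F)
    (Xt : Matrix (Fin p) (Fin m) F) (Yt : Matrix (Fin m) (Fin m) F)
    (hDCF : IsDCF Ω G M N Mt Nt X Y Xt Yt)
    (Kbin : Fin p → Fin m → Bool)
    (hQI : ∀ K : Matrix (Fin p) (Fin m) F,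
      (∀ i j, Kbin i j = false → K i j = 0) →
      (∀ i j, Kbin i j = false → (K * G * K) i j = 0)) :
    ((∃ K : Matrix (Fin p) (Fin m) F,
        (∀ i j, Kbin i j = false → K i j = 0) ∧ Stabilizes Ω G K) ↔
      (∃ Q : Matrix (Fin p) (Fin m) F, MatStable Ω Q ∧
        ∀ i j, Kbin i j = false → (Xt * Mt + M * Q * Mt) i j = 0)) ∧
    (∀ Q : Matrix (Fin p) (Fin m) F, MatStable Ω Q →
      (∀ i j, Kbin i j = false → (Xt * Mt + M * Q * Mt) i j = 0) →
      (∀ i j, Kbin i j = false → ((Y - Q * Nt)⁻¹ * (X + Q * Mt)) i j = 0) ∧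
      Stabilizes Ω G ((Y - Q * Nt)⁻¹ * (X + Q * Mt))) := by
  classical
  obtain ⟨stM, stN, stMt, stNt, stX, stY, stXt, stYt, hM, hMt, hLeft, hRight, bezout⟩ := hDCF
  obtain ⟨b1, b2, b3, b4, b5, b6, b7, b8⟩ := bezout_ids bezout
  have hMinv' : M⁻¹ * M = 1 := Matrix.nonsing_inv_mul M hM
  have hMtinv : Mt * Mt⁻¹ = 1 := Matrix.mul_nonsing_inv Mt hMt
  have hMtinv' : Mt⁻¹ * Mt = 1 := Matrix.nonsing_inv_mul Mt hMt
  have hGM : G * M = N := by rw [hRight, Matrix.mul_assoc, hMinv', Matrix.mul_one]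
  have hMtG : Mt * G = Nt := by rw [hLeft, ← Matrix.mul_assoc, hMtinv, Matrix.one_mul]
  have hNsp : StrictlyProper N := by rw [← hGM]; exact SPM_mul_PrM hG (MS_Pr stM)
  have hNtsp : StrictlyProper Nt := by rw [← hMtG]; exact PrM_mul_SPM (MS_Pr stMt) hG
  -- Part 2 : every admissible Q gives a sparse stabilizing controller
  have part2 : ∀ Q : Matrix (Fin p) (Fin m) F, MatStable Ω Q →
      (∀ i j, Kbin i j = false → (Xt * Mt + M * Q * Mt) i j = 0) →
      (∀ i j, Kbin i j = false → ((Y - Q * Nt)⁻¹ * (X + Q * Mt)) i j = 0) ∧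
      Stabilizes Ω G ((Y - Q * Nt)⁻¹ * (X + Q * Mt)) := by
    intro Q hQst hQsp
    obtain ⟨j1, j2, j3, j4, j5, j6, j7, j8⟩ := bezout_ids (bezout_perturb bezout Q)
    set Yq := Y - Q * Nt with hYqdef
    set Xq := X + Q * Mt with hXqdef
    set Xtq := Xt + M * Q with hXtqdef
    set Ytq := Yt - N * Q with hYtqdef
    have stYq : MatStable Ω Yq := MS_sub stY (MS_mul hQst stNt)
    have stXq : MatStable Ω Xq := MS_add stX (MS_mul hQst stMt)
    have stXtq : MatStable Ω Xtq := MS_add stXt (MS_mul stM hQst)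
    have stYtq : MatStable Ω Ytq := MS_sub stYt (MS_mul stN hQst)
    -- invertibility of Yq and Ytq
    have hYqM : Yq * M = 1 - Xq * N := by rw [← j1]; abel
    have hdYq : IsUnit Yq.det := by
      have hsp : StrictlyProper (Xq * N) := PrM_mul_SPM (MS_Pr stXq) hNsp
      have hne : Yq.det * M.det ≠ 0 := by
        rw [← Matrix.det_mul, hYqM]; exact det_one_sub_SP_ne_zero _ hsp
      exact isUnit_iff_ne_zero.mpr (left_ne_zero_of_mul hne)
    have hNtXtq : Nt * Xtq = 1 - Mt * Ytq := by rw [← j4]; abel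
    have hdYtq : IsUnit Ytq.det := by
      have hsp : StrictlyProper (Nt * Xtq) := SPM_mul_PrM hNtsp (MS_Pr stXtq)
      have hne : Mt.det * Ytq.det ≠ 0 := by
        rw [← Matrix.det_mul, show Mt * Ytq = 1 - Nt * Xtq by rw [hNtXtq]; abel]
        exact det_one_sub_SP_ne_zero _ (SPM_mul_PrM hNtsp (MS_Pr stXtq))
      exact isUnit_iff_ne_zero.mpr (right_ne_zero_of_mul hne)
    have hYqi' : Yq⁻¹ * Yq = 1 := Matrix.nonsing_inv_mul _ hdYq
    have hYtqi : Ytq * Ytq⁻¹ = 1 := Matrix.mul_nonsing_inv _ hdYtq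
    have hYtqi' : Ytq⁻¹ * Ytq = 1 := Matrix.nonsing_inv_mul _ hdYtq
    set K := Yq⁻¹ * Xq with hKdef
    have hKalt : K = Xtq * Ytq⁻¹ := by
      calc K = Yq⁻¹ * Xq * (Ytq * Ytq⁻¹) := by rw [hYtqi, Matrix.mul_one]
      _ = Yq⁻¹ * (Xq * Ytq) * Ytq⁻¹ := by simp only [Matrix.mul_assoc]
      _ = Yq⁻¹ * (Yq * Xtq) * Ytq⁻¹ := by rw [j2]
      _ = Xtq * Ytq⁻¹ := by
          rw [← Matrix.mul_assoc Yq⁻¹ Yq Xtq, hYqi', Matrix.one_mul]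
    have hGXtqMt : G * (Xtq * Mt) = 1 - Ytq * Mt := by
      rw [hLeft]
      calc Mt⁻¹ * Nt * (Xtq * Mt) = Mt⁻¹ * ((Nt * Xtq) * Mt) := by
            simp only [Matrix.mul_assoc]
      _ = Mt⁻¹ * Mt - Mt⁻¹ * (Mt * (Ytq * Mt)) := by
            rw [hNtXtq, Matrix.sub_mul, Matrix.one_mul, Matrix.mul_sub]
            simp only [Matrix.mul_assoc]
      _ = 1 - Ytq * Mt := by rw [hMtinv', ← Matrix.mul_assoc, hMtinv', Matrix.one_mul]
    have hKYtqMt : K * (Ytq * Mt) = Xtq * Mt := by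
      rw [hKalt]
      calc Xtq * Ytq⁻¹ * (Ytq * Mt) = Xtq * ((Ytq⁻¹ * Ytq) * Mt) := by
            simp only [Matrix.mul_assoc]
      _ = Xtq * Mt := by rw [hYtqi', Matrix.one_mul]
    have hA1 : (1 + G * K) * (Ytq * Mt) = 1 := by
      rw [Matrix.add_mul, Matrix.one_mul, Matrix.mul_assoc G K, hKYtqMt, hGXtqMt]
      abel
    have hdetA : IsUnit (1 + G * K).det := Matrix.isUnit_det_of_right_inverse hA1
    have hAinv : (1 + G * K)⁻¹ = Ytq * Mt := Matrix.inv_eq_right_inv hA1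
    have hB1 : (1 + K * G) * (M * Yq) = 1 := by
      have hGMYq : G * (M * Yq) = Ytq * Nt := by
        rw [hRight]
        calc N * M⁻¹ * (M * Yq) = N * ((M⁻¹ * M) * Yq) := by simp only [Matrix.mul_assoc]
        _ = N * Yq := by rw [hMinv', Matrix.one_mul]
        _ = Ytq * Nt := j7
      have hKpart : K * (G * (M * Yq)) = Xtq * Nt := by
        rw [hGMYq, hKdef]
        calc Yq⁻¹ * Xq * (Ytq * Nt) = Yq⁻¹ * ((Xq * Ytq) * Nt) := by
              simp only [Matrix.mul_assoc]
        _ = Yq⁻¹ * ((Yq * Xtq) * Nt) := by rw [j2]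
        _ = Xtq * Nt := by
              simp only [Matrix.mul_assoc]
              rw [← Matrix.mul_assoc Yq⁻¹ Yq, hYqi', Matrix.one_mul]
      rw [Matrix.add_mul, Matrix.one_mul, Matrix.mul_assoc K G (M * Yq), hKpart, j5]
    have hBinv : (1 + K * G)⁻¹ = M * Yq := Matrix.inv_eq_right_inv hB1
    have hstab : Stabilizes Ω G K := by
      refine ⟨hdetA, ?_, ?_, ?_, ?_⟩
      · rw [hAinv]; exact MS_mul stYtq stMt
      · rw [hAinv, Matrix.mul_assoc, hMtG]; exact MS_mul stYtq stNt
      · rw [hAinv, hKYtqMt]; exact MS_mul stXtq stMt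
      · rw [hBinv]; exact MS_mul stM stYq
    -- sparsity of K
    have hKcMt : Xtq * Mt = Xt * Mt + M * Q * Mt := by
      rw [hXtqdef, Matrix.add_mul]
    have hKcsp : Sparse Kbin (Xtq * Mt) := fun i j h => by rw [hKcMt]; exact hQsp i j h
    have hGneg : 1 + (-G) * (Xtq * Mt) = Ytq * Mt := by
      rw [Matrix.neg_mul, hGXtqMt]; abel
    have hdet2 : IsUnit (1 + (-G) * (Xtq * Mt)).det := by
      rw [hGneg, Matrix.det_mul]; exact hdYtq.mul hMt
    have hKrec : (Xtq * Mt) * (1 + (-G) * (Xtq * Mt))⁻¹ = K := by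
      rw [hGneg, Matrix.mul_inv_rev, hKalt]
      calc Xtq * Mt * (Mt⁻¹ * Ytq⁻¹) = Xtq * ((Mt * Mt⁻¹) * Ytq⁻¹) := by
            simp only [Matrix.mul_assoc]
      _ = Xtq * Ytq⁻¹ := by rw [hMtinv, Matrix.one_mul]
    have hQIneg : ∀ K' : Matrix (Fin p) (Fin m) F, Sparse Kbin K' →
        ∀ i j, Kbin i j = false → (K' * (-G) * K') i j = 0 := by
      intro K' hK' i j hij
      have e : K' * (-G) * K' = -(K' * G * K') := by
        rw [Matrix.mul_neg, Matrix.neg_mul]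
      rw [e, Matrix.neg_apply, hQI K' hK' i j hij, neg_zero]
    have hKsp := sparse_closed_loop Kbin (-G) hQIneg (Xtq * Mt) hKcsp hdet2
    rw [hKrec] at hKsp
    exact ⟨hKsp, hstab⟩
  refine ⟨⟨?_, ?_⟩, part2⟩
  · -- forward direction: sparse stabilizing K gives admissible Q
    rintro ⟨K, hKsp, hdet, hst1, hst2, hst3, hst4⟩
    set H := (1 + G * K)⁻¹ with hHdef
    have hH : (1 + G * K) * H = 1 := Matrix.mul_nonsing_inv _ hdet
    have hdetKG : IsUnit (1 + K * G).det := by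
      rw [Matrix.det_one_add_mul_comm]; exact hdet
    have hKGi : (1 + K * G)⁻¹ * (1 + K * G) = 1 := Matrix.nonsing_inv_mul _ hdetKG
    have hKH : (1 + K * G) * (K * H) = K := by
      calc (1 + K * G) * (K * H) = K * ((1 + G * K) * H) := by
            simp only [Matrix.add_mul, Matrix.mul_add, Matrix.one_mul, Matrix.mul_one,
              Matrix.mul_assoc]
      _ = K := by rw [hH, Matrix.mul_one]
    have hKH2 : K * H = (1 + K * G)⁻¹ * K := by
      have h := congrArg (HMul.hMul (1 + K * G)⁻¹) hKH
      rw [← Matrix.mul_assoc, hKGi, Matrix.one_mul] at h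
      exact h
    have hKHG : (K * H) * G = 1 - (1 + K * G)⁻¹ := by
      have e : (1 + K * G)⁻¹ * (1 + K * G) - (1 + K * G)⁻¹ * 1 =
          (1 + K * G)⁻¹ * (K * G) := by
        rw [← Matrix.mul_sub]
        congr 1
        abel
      rw [hKH2, Matrix.mul_assoc, ← e, hKGi, Matrix.mul_one]
    have hMtright : Mt * (G * Xt + Yt) = 1 := by
      rw [Matrix.mul_add, ← Matrix.mul_assoc, hMtG, b4]
    have hMtinv2 : Mt⁻¹ = G * Xt + Yt := Matrix.inv_eq_right_inv hMtright
    set Q := (Y * K - X) * (H * Mt⁻¹) with hQdef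
    have hQstable : MatStable Ω Q := by
      have hQeq : Q = (Y * (K * H * G) - X * (H * G)) * Xt + (Y * (K * H) - X * H) * Yt := by
        rw [hQdef, hMtinv2]
        simp only [Matrix.sub_mul, Matrix.mul_add, Matrix.add_mul, Matrix.mul_assoc]
      rw [hQeq]
      have s1 : MatStable Ω (K * H * G) := by rw [hKHG]; exact MS_sub MS_one hst4
      have s2 : MatStable Ω (H * G) := hst2
      have s3 : MatStable Ω (K * H) := hst3
      have s4 : MatStable Ω H := hst1
      exact MS_add
        (MS_mul (MS_sub (MS_mul stY s1) (MS_mul stX s2)) stXt)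
        (MS_mul (MS_sub (MS_mul stY s3) (MS_mul stX s4)) stYt)
    have hQMt : Q * Mt = (Y * K - X) * H := by
      rw [hQdef]
      calc (Y * K - X) * (H * Mt⁻¹) * Mt = (Y * K - X) * (H * (Mt⁻¹ * Mt)) := by
            simp only [Matrix.mul_assoc]
      _ = (Y * K - X) * H := by rw [hMtinv', Matrix.mul_one]
    have hGKH : G * (K * H) = 1 - H := by
      have h := hH
      rw [Matrix.add_mul, Matrix.one_mul, Matrix.mul_assoc] at h
      exact eq_sub_of_add_eq' h
    have hfinal : Xt * Mt + M * Q * Mt = K * H := by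
      have h1 : M * (Q * Mt) = M * (Y * (K * H)) - (Xt * Mt) * H := by
        rw [hQMt, Matrix.sub_mul, Matrix.mul_sub, ← b6]
        simp only [Matrix.mul_assoc]
      have h2 : Xt * Mt - (Xt * Mt) * H = (Xt * Nt) * (K * H) := by
        calc Xt * Mt - (Xt * Mt) * H = (Xt * Mt) * (1 - H) := by
              rw [Matrix.mul_sub, Matrix.mul_one]
        _ = (Xt * Mt) * (G * (K * H)) := by rw [hGKH]
        _ = (Xt * Nt) * (K * H) := by rw [← hMtG]; simp only [Matrix.mul_assoc]
      calc Xt * Mt + M * Q * Mt = Xt * Mt + M * (Q * Mt) := by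
            simp only [Matrix.mul_assoc]
      _ = (Xt * Mt - (Xt * Mt) * H) + M * (Y * (K * H)) := by rw [h1]; abel
      _ = (Xt * Nt) * (K * H) + (M * Y) * (K * H) := by
            rw [h2]; simp only [Matrix.mul_assoc]
      _ = (M * Y + Xt * Nt) * (K * H) := by rw [Matrix.add_mul]; abel
      _ = K * H := by rw [b5, Matrix.one_mul]
    have hKHsp := sparse_closed_loop Kbin G (fun K' hK' => hQI K' hK') K hKsp hdet
    exact ⟨Q, hQstable, fun i j hij => by rw [hfinal]; exact hKHsp i j hij⟩
  · rintro ⟨Q, hQst, hQsp⟩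
    obtain ⟨hsp, hstab⟩ := part2 Q hQst hQsp
    exact ⟨_, hsp, hstab⟩
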